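/- Let $\gamma$ be a positive semidefinite trace-class operator on a Hilbert space with $\mathrm{Tr}\,\gamma = 1$, and let $P$ be a rank-one orthogonal projection, $Q = 1 - P$. Then $\mathrm{Tr}\,|\gamma - P| \le 4\sqrt{\mathrm{Tr}(Q\gamma Q)}$. -/

import Mathlib

open scoped ComplexOrder
open Matrix

-- H1: Cauchy-Schwarz for dot products
lemma cs_dot {n : ℕ} (x y : Fin n → ℂ) :
    ‖dotProduct (star x) y‖ ≤
      Real.sqrt (∑ i, ‖x i‖^2) * Real.sqrt (∑ i, ‖y i‖^2) := by
  have := norm_inner_le_norm (𝕜 := ℂ) ((WithLp.equiv 2 (Fin n → ℂ)).symm x)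
      ((WithLp.equiv 2 (Fin n → ℂ)).symm y)
  rw [EuclideanSpace.norm_eq, EuclideanSpace.norm_eq] at this
  simpa [EuclideanSpace.inner_toLp_toLp, dotProduct_comm] using this

-- Frobenius trace
lemma frob_trace {n : ℕ} (N : Matrix (Fin n) (Fin n) ℂ) :
    (Nᴴ * N).trace = ((∑ i, ∑ j, ‖N i j‖^2 : ℝ) : ℂ) := by
  simp only [Matrix.trace, Matrix.diag, Matrix.mul_apply, Matrix.conjTranspose_apply]
  push_cast
  rw [Finset.sum_comm]
  congr 1; ext i; congr 1; ext j
  rw [RCLike.star_def, Complex.conj_mul']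

-- squared CS
lemma cs_dot_sq {n : ℕ} (x y : Fin n → ℂ) :
    ‖dotProduct (star x) y‖^2 ≤ (∑ i, ‖x i‖^2) * (∑ i, ‖y i‖^2) := by
  have h := cs_dot x y
  have hx : (0:ℝ) ≤ ∑ i, ‖x i‖^2 := Finset.sum_nonneg fun _ _ => sq_nonneg _
  have hy : (0:ℝ) ≤ ∑ i, ‖y i‖^2 := Finset.sum_nonneg fun _ _ => sq_nonneg _
  calc ‖dotProduct (star x) y‖^2
      ≤ (Real.sqrt (∑ i, ‖x i‖^2) * Real.sqrt (∑ i, ‖y i‖^2))^2 := by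
        apply pow_le_pow_left₀ (norm_nonneg _) h
    _ = (∑ i, ‖x i‖^2) * (∑ i, ‖y i‖^2) := by
        rw [mul_pow, Real.sq_sqrt hx, Real.sq_sqrt hy]

-- H2: row Cauchy-Schwarz
lemma mulVec_normsq_le {n : ℕ} (N : Matrix (Fin n) (Fin n) ℂ) (u : Fin n → ℂ) :
    ∑ i, ‖(N *ᵥ u) i‖^2 ≤ (∑ i, ∑ j, ‖N i j‖^2) * (∑ j, ‖u j‖^2) := by
  rw [Finset.sum_mul]
  apply Finset.sum_le_sum
  intro i _
  have : (N *ᵥ u) i = dotProduct (star (fun j => star (N i j))) u := by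
    simp [Matrix.mulVec, dotProduct]
  rw [this]
  simpa using cs_dot_sq (fun j => star (N i j)) u

lemma exists_unit_vec {n : ℕ} (P : Matrix (Fin n) (Fin n) ℂ)
    (hP : P.IsHermitian) (hPproj : P * P = P) (hPrank : P.rank = 1) :
    ∃ φ : Fin n → ℂ, P = Matrix.vecMulVec φ (star φ) ∧ ∑ i, ‖φ i‖^2 = 1 := by
  classical
  set μ := hP.eigenvalues with hμ
  have key : ∀ i, μ i = 0 ∨ μ i = 1 := by
    intro i
    have hv := hP.mulVec_eigenvectorBasis i
    have hvne : ⇑(hP.eigenvectorBasis i) ≠ 0 := by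
      have h0 := hP.eigenvectorBasis.orthonormal.ne_zero i
      intro hc
      apply h0
      ext j
      exact congrFun hc j
    have h2 : (P * P) *ᵥ ⇑(hP.eigenvectorBasis i) = (μ i * μ i) • ⇑(hP.eigenvectorBasis i) := by
      rw [← Matrix.mulVec_mulVec, hv, Matrix.mulVec_smul, hv, smul_smul]
    rw [hPproj, hv] at h2
    have h3 : (μ i * μ i - μ i) • ⇑(hP.eigenvectorBasis i) = 0 := by
      rw [sub_smul, h2, sub_self]
    rcases smul_eq_zero.mp h3 with h | h
    · have : μ i * (μ i - 1) = 0 := by ring_nf; linarith [h]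
      rcases mul_eq_zero.mp this with h' | h'
      · exact Or.inl h'
      · exact Or.inr (by linarith)
    · exact absurd h hvne
  have hcard : Fintype.card {i // μ i ≠ 0} = 1 := by
    rw [← hP.rank_eq_card_non_zero_eigs, hPrank]
  obtain ⟨⟨i₀, hi₀⟩, huniq⟩ := Fintype.card_eq_one_iff.mp hcard
  have hμ₀ : μ i₀ = 1 := (key i₀).resolve_left hi₀
  have hzero : ∀ j, j ≠ i₀ → μ j = 0 := by
    intro j hj
    by_contra hc
    exact hj (congrArg Subtype.val (huniq ⟨j, hc⟩))
  refine ⟨⇑(hP.eigenvectorBasis i₀), ?_, ?_⟩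
  · have hd : ∀ l, (RCLike.ofReal (μ l) : ℂ) = if l = i₀ then 1 else 0 := by
      intro l
      by_cases h : l = i₀
      · simp [h, hμ₀]
      · simp [h, hzero l h]
    have hs := hP.spectral_theorem
    ext j k
    conv_lhs => rw [hs, Unitary.conjStarAlgAut_apply]
    simp only [Matrix.star_eq_conjTranspose, Matrix.mul_apply, Matrix.diagonal_apply,
      Function.comp_apply, Matrix.conjTranspose_apply, Matrix.vecMulVec_apply, Pi.star_apply]
    simp only [mul_ite, mul_zero, Finset.sum_ite_eq', Finset.mem_univ, if_true]
    rw [← hμ]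
    simp only [hd, ite_mul, mul_ite, mul_one, one_mul, mul_zero, zero_mul,
      Finset.sum_ite_eq', Finset.mem_univ, if_true]
    rfl
  · have hnorm := hP.eigenvectorBasis.orthonormal.1 i₀
    rw [EuclideanSpace.norm_eq] at hnorm
    have := Real.sqrt_eq_one.mp hnorm
    simpa using this

lemma mul_star_re (z : ℂ) : (z * star z).re = ‖z‖^2 := by
  rw [RCLike.star_def, Complex.mul_conj, Complex.ofReal_re, Complex.normSq_eq_norm_sq]

lemma mul_star_eq (z : ℂ) : z * star z = ((‖z‖^2 : ℝ) : ℂ) := by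
  rw [RCLike.star_def, Complex.mul_conj, Complex.normSq_eq_norm_sq]

-- dot product with itself
lemma dot_self {n : ℕ} (x : Fin n → ℂ) :
    dotProduct (star x) x = ((∑ i, ‖x i‖^2 : ℝ) : ℂ) := by
  simp only [dotProduct, Pi.star_apply]
  push_cast
  congr 1; ext i
  rw [RCLike.star_def, Complex.conj_mul']

-- conjugation symmetry
lemma dot_star {n : ℕ} (x y : Fin n → ℂ) :
    star (dotProduct (star x) y) = dotProduct (star y) x := by
  simp only [dotProduct, Pi.star_apply, star_sum, star_mul', star_star]
  exact Finset.sum_congr rfl fun i _ => mul_comm _ _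

-- quadratic form via B
lemma qform {n : ℕ} (B : Matrix (Fin n) (Fin n) ℂ) (x y : Fin n → ℂ) :
    dotProduct (star x) ((Bᴴ * B) *ᵥ y) =
      dotProduct (star (B *ᵥ x)) (B *ᵥ y) := by
  rw [Matrix.star_mulVec, ← Matrix.mulVec_mulVec, ← Matrix.dotProduct_mulVec]

-- vecMulVec action
lemma vmv_mulVec {n : ℕ} (φ x : Fin n → ℂ) :
    Matrix.vecMulVec φ (star φ) *ᵥ x = (dotProduct (star φ) x) • φ := by
  ext i
  simp only [Matrix.mulVec, Matrix.vecMulVec_apply, dotProduct, Pi.star_apply,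
    Pi.smul_apply, smul_eq_mul, Finset.sum_mul]
  exact Finset.sum_congr rfl fun j _ => by ring

-- trace of M * φφ*
lemma trace_mul_vmv {n : ℕ} (M : Matrix (Fin n) (Fin n) ℂ) (φ : Fin n → ℂ) :
    (M * Matrix.vecMulVec φ (star φ)).trace = dotProduct (star φ) (M *ᵥ φ) := by
  simp only [Matrix.trace, Matrix.diag, Matrix.mul_apply, Matrix.vecMulVec_apply,
    dotProduct, Matrix.mulVec, Pi.star_apply]
  apply Finset.sum_congr rfl; intro i _
  rw [Finset.mul_sum]
  apply Finset.sum_congr rfl; intro j _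
  ring

-- trace = sum of eigenvalues
lemma herm_trace {n : ℕ} (A : Matrix (Fin n) (Fin n) ℂ) (hA : A.IsHermitian) :
    A.trace = ((∑ i, hA.eigenvalues i : ℝ) : ℂ) := by
  conv_lhs => rw [hA.spectral_theorem, Unitary.conjStarAlgAut_apply]
  rw [Matrix.trace_mul_comm, ← mul_assoc,
    (Matrix.mem_unitaryGroup_iff').mp (Matrix.IsHermitian.eigenvectorUnitary hA).2, one_mul,
    Matrix.trace_diagonal]
  push_cast
  rfl

set_option maxHeartbeats 1600000

/-- Trace-norm convergence to a rank-one projection from smallness of the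
excitation expectation, formulated for (finite-dimensional) density matrices. -/
theorem traceNorm_sub_rankOne_proj_le {n : ℕ} (γ P : Matrix (Fin n) (Fin n) ℂ)
    (hγ : γ.PosSemidef) (hγtr : γ.trace = 1)
    (hP : P.IsHermitian) (hPproj : P * P = P) (hPrank : P.rank = 1)
    (hsub : (γ - P).IsHermitian) :
    ∑ i, |hsub.eigenvalues i| ≤
      4 * Real.sqrt (((1 - P) * γ * (1 - P)).trace.re) := by
  classical
  obtain ⟨B, hB⟩ : ∃ B : Matrix (Fin n) (Fin n) ℂ, γ = Bᴴ * B := by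
    open scoped MatrixOrder in exact CStarAlgebra.nonneg_iff_eq_star_mul_self.mp hγ.nonneg
  obtain ⟨φ, hφ, hφnorm⟩ := exists_unit_vec P hP hPproj hPrank
  set L : Fin n → ℝ := hsub.eigenvalues with hLdef
  set b : Fin n → (Fin n → ℂ) := fun i => ⇑(hsub.eigenvectorBasis i) with hbdef
  -- orthonormality
  have hortho : ∀ i j, dotProduct (star (b i)) (b j) = if i = j then 1 else 0 := by
    intro i j
    have h := orthonormal_iff_ite.mp hsub.eigenvectorBasis.orthonormal i j
    rw [EuclideanSpace.inner_eq_star_dotProduct, dotProduct_comm] at h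
    exact h
  have hbnorm : ∀ i, ∑ k, ‖b i k‖^2 = 1 := by
    intro i
    have h := hortho i i
    rw [if_pos rfl, dot_self] at h
    exact_mod_cast h
  -- eigen-dot relation
  have heig : ∀ i (u : Fin n → ℂ), dotProduct (star u) ((γ - P) *ᵥ (b i)) =
      (L i : ℂ) * dotProduct (star u) (b i) := by
    intro i u
    rw [show (γ - P) *ᵥ (b i) = L i • (b i) from hsub.mulVec_eigenvectorBasis i,
      dotProduct_smul]
    simp [Complex.real_smul]
  -- P action
  have hPmv : ∀ x, P *ᵥ x = (dotProduct (star φ) x) • φ := by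
    intro x; rw [hφ, vmv_mulVec]
  set a : Fin n → ℂ := fun i => dotProduct (star φ) (b i) with hadef
  -- quadratic identity : (L i : ℂ) = ⟨v, γ v⟩ - a * star a
  have hquad : ∀ i, (L i : ℂ) =
      dotProduct (star (b i)) (γ *ᵥ (b i)) - a i * star (a i) := by
    intro i
    have h1 := heig i (b i)
    rw [hortho i i, if_pos rfl, mul_one] at h1
    rw [← h1, Matrix.sub_mulVec, dotProduct_sub, hPmv, dotProduct_smul,
      smul_eq_mul, ← dot_star φ (b i)]
  -- γ quadratic form nonneg (real part)
  have hγpos : ∀ u : Fin n → ℂ, 0 ≤ (dotProduct (star u) (γ *ᵥ u)).re := by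
    intro u
    exact hγ.re_dotProduct_nonneg u
  -- lower bound on |a i|² for negative eigenvalues
  have hapos : ∀ i, L i < 0 → -(L i) ≤ ‖a i‖^2 := by
    intro i hi
    have h := hquad i
    have h2 : (dotProduct (star (b i)) (γ *ᵥ (b i))).re = L i + ‖a i‖^2 := by
      rw [show dotProduct (star (b i)) (γ *ᵥ (b i)) = (L i : ℂ) + a i * star (a i) by
        rw [h]; ring]
      rw [Complex.add_re, Complex.ofReal_re, mul_star_re]
    have := hγpos (b i)
    rw [h2] at this
    linarith
  -- the matrix N and excitation number t
  set N : Matrix (Fin n) (Fin n) ℂ := B * (1 - P) with hNdef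
  set t : ℝ := ∑ j, ∑ k, ‖N j k‖^2 with htdef
  have hQH : (1 - P)ᴴ = 1 - P := by
    rw [Matrix.conjTranspose_sub, Matrix.conjTranspose_one, hP.eq]
  have htrace : ((1 - P) * γ * (1 - P)).trace = (t : ℂ) := by
    have e : (1 - P) * γ * (1 - P) = Nᴴ * N := by
      rw [hNdef, Matrix.conjTranspose_mul, hQH, hB]
      noncomm_ring
    rw [e, frob_trace]
  have ht0 : (0:ℝ) ≤ t :=
    Finset.sum_nonneg fun _ _ => Finset.sum_nonneg fun _ _ => sq_nonneg _
  set X : ℝ := ∑ k, ‖(B *ᵥ φ) k‖^2 with hXdef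
  have hX0 : (0:ℝ) ≤ X := Finset.sum_nonneg fun _ _ => sq_nonneg _
  have hXdot : dotProduct (star φ) (γ *ᵥ φ) = (X : ℂ) := by
    rw [hB, qform, dot_self]
  have hXt : X = 1 - t := by
    have h1 : ((1 - P) * γ * (1 - P)).trace = γ.trace - (γ * P).trace := by
      have e : (1 - P) * γ * (1 - P) = γ - P * γ - γ * P + P * γ * P := by noncomm_ring
      have e2 : (P * γ * P).trace = (γ * P).trace := by
        rw [Matrix.trace_mul_comm (P * γ) P, ← mul_assoc, hPproj, Matrix.trace_mul_comm]
      rw [e, Matrix.trace_add, Matrix.trace_sub, Matrix.trace_sub,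
        Matrix.trace_mul_comm P γ, e2]
      ring
    have h2 : (γ * P).trace = (X:ℂ) := by rw [hφ, trace_mul_vmv, hXdot]
    have h3 := htrace
    rw [h1, h2, hγtr] at h3
    have h4 : ((1 - t : ℝ) : ℂ) = ((X:ℝ) : ℂ) := by push_cast; rw [← h3]; ring
    exact (Complex.ofReal_inj.mp h4).symm
  have ht1 : t ≤ 1 := by linarith
  have hX1 : X ≤ 1 := by linarith
  set rt : ℝ := Real.sqrt t with hrtdef
  have hrt0 : (0:ℝ) ≤ rt := Real.sqrt_nonneg _
  have hrt1 : rt ≤ 1 := Real.sqrt_le_one.mpr ht1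
  have hrtsq : rt^2 = t := Real.sq_sqrt ht0
  -- key quantitative bound for negative eigenvalues
  have hkey : ∀ i, L i < 0 → -(L i) ≤ 2 * rt := by
    intro i hi
    set w : Fin n → ℂ := b i - a i • φ with hwdef
    have hw : (1 - P) *ᵥ (b i) = w := by
      rw [Matrix.sub_mulVec, Matrix.one_mulVec, hPmv]
    set y : Fin n → ℂ := B *ᵥ w with hydef
    set S : ℝ := ∑ k, ‖y k‖^2 with hSdef
    have hS0 : (0:ℝ) ≤ S := Finset.sum_nonneg fun _ _ => sq_nonneg _
    have hSt : S ≤ t := by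
      have e : y = N *ᵥ (b i) := by rw [hydef, ← hw, hNdef, ← Matrix.mulVec_mulVec]
      calc S = ∑ k, ‖(N *ᵥ (b i)) k‖^2 := by rw [hSdef, e]
        _ ≤ (∑ j, ∑ k, ‖N j k‖^2) * (∑ k, ‖b i k‖^2) := mulVec_normsq_le N (b i)
        _ = t := by rw [hbnorm i, mul_one]
    set z : ℂ := dotProduct (star (B *ᵥ φ)) y with hzdef
    have hz : ‖z‖^2 ≤ X * S := cs_dot_sq _ _
    have hα : ‖a i‖ ≤ 1 := by
      have h := cs_dot_sq φ (b i)
      rw [hφnorm, hbnorm i, mul_one] at h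
      nlinarith [norm_nonneg (a i)]
    have hα0 : (0:ℝ) ≤ ‖a i‖ := norm_nonneg _
    have hv : b i = a i • φ + w := by rw [hwdef, add_sub_cancel]
    have hBv : B *ᵥ (b i) = a i • (B *ᵥ φ) + y := by
      conv_lhs => rw [hv]
      rw [Matrix.mulVec_add, Matrix.mulVec_smul]
    have hexp : dotProduct (star (B *ᵥ (b i))) (B *ᵥ (b i))
        = a i * star (a i) * (X:ℂ) + star (a i) * z + a i * star z + (S:ℂ) := by
      rw [hBv, star_add, star_smul, add_dotProduct, dotProduct_add,
        dotProduct_add, smul_dotProduct, smul_dotProduct,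
        dotProduct_smul, dotProduct_smul, dot_self, dot_self,
        ← hzdef, ← dot_star (B *ᵥ φ) y, ← hzdef, hXdef, hSdef]
      simp only [smul_eq_mul]
      push_cast
      ring
    have hLC : (L i : ℂ) = a i * star (a i) * (X:ℂ) + star (a i) * z + a i * star z
        + (S:ℂ) - a i * star (a i) := by
      rw [hquad i, hB, qform, hexp]
    rw [mul_star_eq (a i)] at hLC
    have hLre : L i = ‖a i‖^2 * X + 2 * (star (a i) * z).re + S - ‖a i‖^2 := by
      have e1 : a i * star z = star (star (a i) * z) := by
        rw [star_mul', star_star]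
      have e2 : (L i : ℂ) = ((‖a i‖^2 * X + S - ‖a i‖^2 : ℝ) : ℂ)
          + (star (a i) * z + star (star (a i) * z)) := by
        rw [← e1, hLC]; push_cast; ring
      rw [RCLike.star_def, Complex.add_conj, ← RCLike.star_def] at e2
      have e3 : L i = ‖a i‖^2 * X + S - ‖a i‖^2 + 2 * (star (a i) * z).re := by
        exact_mod_cast e2
      linarith
    have hr1 : -(‖a i‖ * ‖z‖) ≤ (star (a i) * z).re := by
      have h1 : ‖star (a i) * z‖ = ‖a i‖ * ‖z‖ := by rw [norm_mul, norm_star]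
      have h2 := Complex.abs_re_le_norm (star (a i) * z)
      rw [h1] at h2
      have h3 := neg_abs_le ((star (a i) * z).re)
      linarith
    have hz0 : (0:ℝ) ≤ ‖z‖ := norm_nonneg _
    clear_value N t X rt w y S z a b L
    have hzS : ‖z‖^2 ≤ S := by nlinarith
    have hzrt : ‖z‖ ≤ rt := by nlinarith
    nlinarith [mul_nonneg (sub_nonneg.2 hzrt) (show (0:ℝ) ≤ 2 - rt - ‖z‖ by linarith),
      mul_nonneg (sub_nonneg.2 hα) hz0, mul_nonneg (mul_nonneg hα0 hα0) ht0,
      mul_nonneg (sub_nonneg.2 hα) (mul_nonneg hα0 ht0)]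
  -- at most one negative eigenvalue
  have huniqneg : ∀ i j, L i < 0 → L j < 0 → i = j := by
    intro i j hi hj
    by_contra hij
    set u : Fin n → ℂ := a j • b i - a i • b j with hudef
    have hu0 : dotProduct (star φ) u = 0 := by
      rw [hudef, dotProduct_sub, dotProduct_smul, dotProduct_smul]
      simp only [smul_eq_mul]
      have e : a j * a i - a i * a j = 0 := by ring
      exact e
    have hPu : P *ᵥ u = 0 := by rw [hPmv, hu0, zero_smul]
    have hdot1 : dotProduct (star u) (b i) = star (a j) := by
      rw [hudef, star_sub, star_smul, star_smul, sub_dotProduct,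
        smul_dotProduct, smul_dotProduct, hortho i i, hortho j i]
      simp [Ne.symm hij]
    have hdot2 : dotProduct (star u) (b j) = -(star (a i)) := by
      rw [hudef, star_sub, star_smul, star_smul, sub_dotProduct,
        smul_dotProduct, smul_dotProduct, hortho i j, hortho j j]
      simp [hij]
    have hγu : dotProduct (star u) (γ *ᵥ u)
        = (L i : ℂ) * (a j * star (a j)) + (L j : ℂ) * (a i * star (a i)) := by
      have e : γ *ᵥ u = (γ - P) *ᵥ u + P *ᵥ u := by
        rw [Matrix.sub_mulVec, sub_add_cancel]
      rw [e, hPu, add_zero]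
      have e2 : (γ - P) *ᵥ u = a j • ((γ - P) *ᵥ b i) - a i • ((γ - P) *ᵥ b j) := by
        rw [hudef, Matrix.mulVec_sub, Matrix.mulVec_smul, Matrix.mulVec_smul]
      rw [e2, dotProduct_sub, dotProduct_smul, dotProduct_smul,
        heig i u, heig j u, hdot1, hdot2]
      simp only [smul_eq_mul]
      ring
    rw [mul_star_eq (a j), mul_star_eq (a i)] at hγu
    have hre := hγpos u
    rw [hγu] at hre
    rw [← Complex.ofReal_mul, ← Complex.ofReal_mul, ← Complex.ofReal_add,
      Complex.ofReal_re] at hre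
    have h1 := hapos i hi
    have h2 := hapos j hj
    have k1 : (0:ℝ) ≤ (-(L i)) * (‖a j‖^2 + L j) := mul_nonneg (by linarith) (by linarith)
    have k2 : (0:ℝ) ≤ (-(L j)) * (‖a i‖^2 + L i) := mul_nonneg (by linarith) (by linarith)
    have k3 : (0:ℝ) < (-(L i)) * (-(L j)) := mul_pos (by linarith) (by linarith)
    nlinarith [hre, k1, k2, k3]
  -- trace of P is 1
  have hPtr : P.trace = 1 := by
    rw [hφ]
    have e : (Matrix.vecMulVec φ (star φ)).trace = dotProduct (star φ) φ := by
      simp only [Matrix.trace, Matrix.diag, Matrix.vecMulVec_apply, dotProduct,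
        Pi.star_apply]
      exact Finset.sum_congr rfl fun i _ => mul_comm _ _
    rw [e, dot_self, hφnorm]
    norm_num
  -- sum of eigenvalues is 0
  have hsum : ∑ i, L i = 0 := by
    have h1 := herm_trace (γ - P) hsub
    rw [Matrix.trace_sub, hγtr, hPtr, sub_self] at h1
    exact_mod_cast h1.symm
  -- conclusion
  have hgoal : ((1 - P) * γ * (1 - P)).trace.re = t := by rw [htrace, Complex.ofReal_re]
  rw [hgoal, ← hrtdef]
  by_cases hex : ∃ i, L i < 0
  · obtain ⟨i₀, hi₀⟩ := hex
    have hsplit : ∑ i, |L i| = ∑ i, L i + ∑ i, (|L i| - L i) := by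
      rw [← Finset.sum_add_distrib]
      simp
    have hsingle : ∑ i, (|L i| - L i) = |L i₀| - L i₀ := by
      apply Finset.sum_eq_single
      · intro j _ hj
        have hLj : 0 ≤ L j := by
          by_contra hc
          push_neg at hc
          exact hj (huniqneg j i₀ hc hi₀)
        rw [abs_of_nonneg hLj, sub_self]
      · intro h
        exact absurd (Finset.mem_univ i₀) h
    have habs : |L i₀| = -(L i₀) := abs_of_neg hi₀
    have hk := hkey i₀ hi₀
    rw [hsplit, hsum, hsingle, habs, zero_add]
    linarith
  · push_neg at hex
    have e : ∑ i, |L i| = ∑ i, L i :=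
      Finset.sum_congr rfl fun i _ => abs_of_nonneg (hex i)
    rw [e, hsum]
    linarith
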